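/- (Orientation lemma) For any finite sample S ⊆ X, the one-inclusion graph on F|_S induced by a class F of VC-dimension at most d admits an orientation of its edges such that every vertex has out-degree at most d. -/

import Mathlib

open scoped Classical

noncomputable section

/-- A coordinate set `I` is shattered by `V ⊆ {0,1}^m`. -/
def CubeShatters {m : ℕ} (V : Finset (Fin m → Bool)) (I : Finset (Fin m)) : Prop :=
  ∀ g : Fin m → Bool, ∃ v ∈ V, ∀ i ∈ I, v i = g i
section
variable {m : ℕ}

def OiFlip (u : Fin m → Bool) (i : Fin m) : Fin m → Bool := Function.update u i (!u i)

lemma oiFlip_apply_self (u : Fin m → Bool) (i : Fin m) : OiFlip u i i = !u i := by simp [OiFlip]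

lemma oiFlip_apply_ne (u : Fin m → Bool) (i j : Fin m) (h : j ≠ i) : OiFlip u i j = u j := by
  simp [OiFlip, Function.update_of_ne h]

def OiEdges (W : Finset (Fin m → Bool)) : Finset ((Fin m → Bool) × Fin m) :=
  (W ×ˢ Finset.univ).filter (fun p => p.1 p.2 = false ∧ OiFlip p.1 p.2 ∈ W)

lemma mem_oiEdges {W : Finset (Fin m → Bool)} {p : (Fin m → Bool) × Fin m} :
    p ∈ OiEdges W ↔ p.1 ∈ W ∧ p.1 p.2 = false ∧ OiFlip p.1 p.2 ∈ W := by
  simp [OiEdges, and_assoc]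

lemma oiEdges_mono {W W' : Finset (Fin m → Bool)} (h : W ⊆ W') : OiEdges W ⊆ OiEdges W' := by
  intro p hp
  rw [mem_oiEdges] at hp ⊢
  exact ⟨h hp.1, hp.2.1, h hp.2.2⟩

def OiLvl (b : Bool) (W : Finset (Fin (m+1) → Bool)) : Finset (Fin m → Bool) :=
  (W.filter (fun v => v (Fin.last m) = b)).image Fin.init

lemma mem_oiLvl {b : Bool} {W : Finset (Fin (m+1) → Bool)} {w : Fin m → Bool} :
    w ∈ OiLvl b W ↔ Fin.snoc w b ∈ W := by
  constructor
  · rintro hw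
    simp only [OiLvl, Finset.mem_image, Finset.mem_filter] at hw
    obtain ⟨v, ⟨hv, hvb⟩, rfl⟩ := hw
    rwa [← hvb, Fin.snoc_init_self]
  · intro h
    simp only [OiLvl, Finset.mem_image, Finset.mem_filter]
    exact ⟨Fin.snoc w b, ⟨h, by simp⟩, by simp⟩

lemma init_injOn {v w : Fin (m+1) → Bool} (h : Fin.init v = Fin.init w)
    (h2 : v (Fin.last m) = w (Fin.last m)) : v = w := by
  rw [← Fin.snoc_init_self v, ← Fin.snoc_init_self w, h, h2]

lemma oiLvl_card (W : Finset (Fin (m+1) → Bool)) :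
    (OiLvl false W).card + (OiLvl true W).card = W.card := by
  have key : ∀ b : Bool, (OiLvl b W).card = (W.filter (fun v => v (Fin.last m) = b)).card := by
    intro b
    apply Finset.card_image_of_injOn
    intro v hv w hw h
    simp only [Finset.mem_coe, Finset.mem_filter] at hv hw
    exact init_injOn h (by rw [hv.2, hw.2])
  rw [key, key,
    ← Finset.card_filter_add_card_filter_not (p := fun v => v (Fin.last m) = false) (s := W)]
  congr 1
  apply Finset.card_bij (fun v _ => v)
  · intro v hv
    simp only [Finset.mem_filter] at hv ⊢
    exact ⟨hv.1, by simpa using hv.2⟩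
  · intro v hv w hw h; exact h
  · intro v hv
    simp only [Finset.mem_filter] at hv ⊢
    exact ⟨v, ⟨hv.1, by simp [hv.2]⟩, rfl⟩

/-- snoc of a flip in the lower cube equals the flip upstairs. -/
lemma snoc_oiFlip (v : Fin (m+1) → Bool) (j : Fin m) :
    Fin.snoc (OiFlip (Fin.init v) j) (v (Fin.last m)) = OiFlip v (Fin.castSucc j) := by
  funext i
  refine Fin.lastCases ?_ (fun j' => ?_) i
  · rw [Fin.snoc_last, oiFlip_apply_ne _ _ _ (Fin.ne_of_gt (Fin.castSucc_lt_last j))]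
  · rw [Fin.snoc_castSucc]
    by_cases h : j' = j
    · subst h
      rw [oiFlip_apply_self, oiFlip_apply_self, Fin.init]
    · rw [oiFlip_apply_ne _ _ _ h,
        oiFlip_apply_ne _ _ _ (fun hc => h (Fin.castSucc_injective m hc)), Fin.init]

lemma snoc_true_eq_oiFlip_last {v : Fin (m+1) → Bool} (h : v (Fin.last m) = false) :
    Fin.snoc (Fin.init v) true = OiFlip v (Fin.last m) := by
  funext i
  refine Fin.lastCases ?_ (fun j' => ?_) i
  · rw [Fin.snoc_last, oiFlip_apply_self, h]; rfl
  · rw [Fin.snoc_castSucc,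
      oiFlip_apply_ne _ _ _ (Fin.ne_of_lt (Fin.castSucc_lt_last j')), Fin.init]

lemma snoc_self {v : Fin (m+1) → Bool} {b : Bool} (h : v (Fin.last m) = b) :
    Fin.snoc (Fin.init v) b = v := by
  rw [← h, Fin.snoc_init_self]

def OiProj (p : (Fin (m+1) → Bool) × Fin (m+1)) :
    ((Fin m → Bool) × Fin m) ⊕ (((Fin m → Bool) × Fin m) ⊕ (Fin m → Bool)) :=
  if h : p.2 = Fin.last m then Sum.inr (Sum.inr (Fin.init p.1))
  else if p.1 (Fin.last m) = false then Sum.inl (Fin.init p.1, p.2.castPred h)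
  else Sum.inr (Sum.inl (Fin.init p.1, p.2.castPred h))

lemma oiProj_last (v : Fin (m+1) → Bool) :
    OiProj (v, Fin.last m) = Sum.inr (Sum.inr (Fin.init v)) := by simp [OiProj]

lemma oiProj_false {v : Fin (m+1) → Bool} {i : Fin (m+1)} (h : i ≠ Fin.last m)
    (hb : v (Fin.last m) = false) :
    OiProj (v, i) = Sum.inl (Fin.init v, i.castPred h) := by simp [OiProj, h, hb]

lemma oiProj_true {v : Fin (m+1) → Bool} {i : Fin (m+1)} (h : i ≠ Fin.last m)
    (hb : v (Fin.last m) = true) :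
    OiProj (v, i) = Sum.inr (Sum.inl (Fin.init v, i.castPred h)) := by simp [OiProj, h, hb]

lemma oiEdges_card_le (W : Finset (Fin (m+1) → Bool)) :
    (OiEdges W).card ≤ (OiEdges (OiLvl false W)).card +
      ((OiEdges (OiLvl true W)).card + (OiLvl false W ∩ OiLvl true W).card) := by
  classical
  have := Finset.card_le_card_of_injOn (f := OiProj) (s := OiEdges W)
    (t := (OiEdges (OiLvl false W)).disjSum
      (((OiEdges (OiLvl true W)).disjSum (OiLvl false W ∩ OiLvl true W)))) ?_ ?_
  · simpa [Finset.card_disjSum] using this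
  · -- maps to
    rintro ⟨v, i⟩ hp
    rw [Finset.mem_coe, mem_oiEdges] at hp
    obtain ⟨hpW, hpf, hpflip⟩ := hp
    dsimp only at hpf hpflip
    by_cases h : i = Fin.last m
    · subst h
      rw [oiProj_last]
      simp only [Finset.mem_coe, Finset.inr_mem_disjSum, Finset.mem_inter]
      constructor
      · rw [mem_oiLvl, snoc_self hpf]; exact hpW
      · rw [mem_oiLvl, snoc_true_eq_oiFlip_last hpf]; exact hpflip
    · have hcs : Fin.castSucc (i.castPred h) = i := Fin.castSucc_castPred i h
      have hmem : ∀ b : Bool, v (Fin.last m) = b →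
          (Fin.init v, i.castPred h) ∈ OiEdges (OiLvl b W) := by
        intro b hb
        rw [mem_oiEdges]
        refine ⟨?_, ?_, ?_⟩
        · rw [mem_oiLvl, ← hb, Fin.snoc_init_self]; exact hpW
        · show Fin.init v (i.castPred h) = false
          rw [Fin.init, hcs]; exact hpf
        · rw [mem_oiLvl, ← hb, snoc_oiFlip, hcs]; exact hpflip
      cases hb : v (Fin.last m)
      · rw [oiProj_false h hb]
        exact Finset.inl_mem_disjSum.2 (hmem false hb)
      · rw [oiProj_true h hb]
        exact Finset.inr_mem_disjSum.2 (Finset.inl_mem_disjSum.2 (hmem true hb))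
  · -- injective on edges
    rintro ⟨v, i⟩ hp ⟨w, j⟩ hq hpq
    rw [Finset.mem_coe, mem_oiEdges] at hp hq
    dsimp only at hp hq
    have key : ∀ (h1 : i ≠ Fin.last m) (h2 : j ≠ Fin.last m),
        Fin.init v = Fin.init w → i.castPred h1 = j.castPred h2 →
        v (Fin.last m) = w (Fin.last m) → ((v, i) : _ × _) = (w, j) := by
      intro h1 h2 hvw hij hb
      have : i = j := by rw [← Fin.castSucc_castPred i h1, ← Fin.castSucc_castPred j h2, hij]
      exact Prod.ext (init_injOn hvw hb) this
    by_cases h1 : i = Fin.last m <;> by_cases h2 : j = Fin.last m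
    · subst h1; subst h2
      rw [oiProj_last, oiProj_last] at hpq
      simp only [Sum.inr.injEq] at hpq
      have : v (Fin.last m) = w (Fin.last m) := by rw [hp.2.1, hq.2.1]
      rw [init_injOn hpq this]
    · subst h1
      rw [oiProj_last] at hpq
      cases hb : w (Fin.last m)
      · rw [oiProj_false h2 hb] at hpq; simp at hpq
      · rw [oiProj_true h2 hb] at hpq; simp at hpq
    · subst h2
      rw [oiProj_last] at hpq
      cases hb : v (Fin.last m)
      · rw [oiProj_false h1 hb] at hpq; simp at hpq
      · rw [oiProj_true h1 hb] at hpq; simp at hpq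
    · cases hb1 : v (Fin.last m) <;> cases hb2 : w (Fin.last m)
      · rw [oiProj_false h1 hb1, oiProj_false h2 hb2] at hpq
        simp only [Sum.inl.injEq, Prod.mk.injEq] at hpq
        exact key h1 h2 hpq.1 hpq.2 (by rw [hb1, hb2])
      · rw [oiProj_false h1 hb1, oiProj_true h2 hb2] at hpq; simp at hpq
      · rw [oiProj_true h1 hb1, oiProj_false h2 hb2] at hpq; simp at hpq
      · rw [oiProj_true h1 hb1, oiProj_true h2 hb2] at hpq
        simp only [Sum.inr.injEq, Sum.inl.injEq, Prod.mk.injEq] at hpq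
        exact key h1 h2 hpq.1 hpq.2 (by rw [hb1, hb2])

end

lemma cubeShatters_mono {m : ℕ} {W W' : Finset (Fin m → Bool)} (h : W ⊆ W')
    {I : Finset (Fin m)} (hs : CubeShatters W I) : CubeShatters W' I := by
  intro g
  obtain ⟨v, hv, hvg⟩ := hs g
  exact ⟨v, h hv, hvg⟩

lemma cubeShatters_union {m : ℕ} {W : Finset (Fin (m+1) → Bool)} {I : Finset (Fin m)}
    (h : CubeShatters (OiLvl false W ∪ OiLvl true W) I) :
    CubeShatters W (I.image Fin.castSucc) := by
  intro g
  obtain ⟨w, hw, hwg⟩ := h (fun j => g (Fin.castSucc j))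
  rw [Finset.mem_union] at hw
  have : ∃ b : Bool, Fin.snoc w b ∈ W := by
    rcases hw with hw | hw
    · exact ⟨false, mem_oiLvl.1 hw⟩
    · exact ⟨true, mem_oiLvl.1 hw⟩
  obtain ⟨b, hb⟩ := this
  refine ⟨Fin.snoc w b, hb, ?_⟩
  intro i hi
  rw [Finset.mem_image] at hi
  obtain ⟨j, hj, rfl⟩ := hi
  rw [Fin.snoc_castSucc]
  exact hwg j hj

lemma cubeShatters_inter {m : ℕ} {W : Finset (Fin (m+1) → Bool)} {I : Finset (Fin m)}
    (h : CubeShatters (OiLvl false W ∩ OiLvl true W) I) :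
    CubeShatters W (insert (Fin.last m) (I.image Fin.castSucc)) := by
  intro g
  obtain ⟨w, hw, hwg⟩ := h (fun j => g (Fin.castSucc j))
  rw [Finset.mem_inter] at hw
  have hb : Fin.snoc w (g (Fin.last m)) ∈ W := by
    cases hgb : g (Fin.last m)
    · exact mem_oiLvl.1 hw.1
    · exact mem_oiLvl.1 hw.2
  refine ⟨Fin.snoc w (g (Fin.last m)), hb, ?_⟩
  intro i hi
  rw [Finset.mem_insert] at hi
  rcases hi with rfl | hi
  · rw [Fin.snoc_last]
  · rw [Finset.mem_image] at hi
    obtain ⟨j, hj, rfl⟩ := hi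
    rw [Fin.snoc_castSucc]
    exact hwg j hj

lemma card_image_castSucc {m : ℕ} (I : Finset (Fin m)) :
    (I.image Fin.castSucc).card = I.card :=
  Finset.card_image_of_injective I (Fin.castSucc_injective m)

lemma last_not_mem_image {m : ℕ} (I : Finset (Fin m)) :
    Fin.last m ∉ I.image Fin.castSucc := by
  rw [Finset.mem_image]
  rintro ⟨j, _, hj⟩
  exact absurd hj (Fin.ne_of_lt (Fin.castSucc_lt_last j))

theorem oi_density : ∀ (m d : ℕ) (W : Finset (Fin m → Bool)),
    (∀ I, CubeShatters W I → I.card ≤ d) → (OiEdges W).card ≤ d * W.card := by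
  intro m
  induction m with
  | zero =>
    intro d W _
    have : OiEdges W = ∅ := Finset.eq_empty_of_forall_notMem (fun p _ => p.2.elim0)
    simp [this]
  | succ m ih =>
    intro d W hW
    set W0 := OiLvl false W with hW0
    set W1 := OiLvl true W with hW1
    have hUnion : (OiEdges W0 ∪ OiEdges W1) ⊆ OiEdges (W0 ∪ W1) :=
      Finset.union_subset (oiEdges_mono Finset.subset_union_left)
        (oiEdges_mono Finset.subset_union_right)
    have hInter : (OiEdges W0 ∩ OiEdges W1) ⊆ OiEdges (W0 ∩ W1) := by
      intro p hp
      rw [Finset.mem_inter] at hp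
      obtain ⟨hpa, hpb⟩ := hp
      rw [mem_oiEdges] at hpa hpb ⊢
      exact ⟨Finset.mem_inter.2 ⟨hpa.1, hpb.1⟩, hpa.2.1,
        Finset.mem_inter.2 ⟨hpa.2.2, hpb.2.2⟩⟩
    have hu : (OiEdges (W0 ∪ W1)).card ≤ d * (W0 ∪ W1).card := by
      apply ih
      intro I hI
      have := hW _ (cubeShatters_union hI)
      rwa [card_image_castSucc] at this
    have hVCi : ∀ I, CubeShatters (W0 ∩ W1) I → I.card + 1 ≤ d := by
      intro I hI
      have := hW _ (cubeShatters_inter hI)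
      rwa [Finset.card_insert_of_notMem (last_not_mem_image I), card_image_castSucc] at this
    have hi' : (OiEdges (W0 ∩ W1)).card ≤ (d - 1) * (W0 ∩ W1).card := by
      apply ih
      intro I hI
      have := hVCi I hI
      omega
    have hd1 : (W0 ∩ W1).Nonempty → 1 ≤ d := by
      rintro ⟨x, hx⟩
      have : CubeShatters (W0 ∩ W1) ∅ := fun g => ⟨x, hx, by simp⟩
      simpa using hVCi ∅ this
    have hcards : (W0 ∪ W1).card + (W0 ∩ W1).card = W.card := by
      rw [Finset.card_union_add_card_inter, oiLvl_card]
    have hE01 : (OiEdges W0).card + (OiEdges W1).card ≤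
        (OiEdges (W0 ∪ W1)).card + (OiEdges (W0 ∩ W1)).card := by
      rw [← Finset.card_union_add_card_inter]
      exact Nat.add_le_add (Finset.card_le_card hUnion) (Finset.card_le_card hInter)
    have hmain := oiEdges_card_le W
    rw [← hW0, ← hW1] at hmain
    have hfin : (d - 1) * (W0 ∩ W1).card + (W0 ∩ W1).card = d * (W0 ∩ W1).card := by
      rcases Finset.eq_empty_or_nonempty (W0 ∩ W1) with he | hne
      · rw [he]; simp
      · have hd := hd1 hne
        cases d with
        | zero => omega
        | succ d' => simp [Nat.succ_mul]
    calc (OiEdges W).card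
        ≤ (OiEdges W0).card + ((OiEdges W1).card + (W0 ∩ W1).card) := hmain
      _ = ((OiEdges W0).card + (OiEdges W1).card) + (W0 ∩ W1).card := by ring
      _ ≤ ((OiEdges (W0 ∪ W1)).card + (OiEdges (W0 ∩ W1)).card) + (W0 ∩ W1).card :=
          Nat.add_le_add_right hE01 _
      _ ≤ (d * (W0 ∪ W1).card + (d - 1) * (W0 ∩ W1).card) + (W0 ∩ W1).card :=
          Nat.add_le_add_right (Nat.add_le_add hu hi') _
      _ = d * (W0 ∪ W1).card + d * (W0 ∩ W1).card := by rw [add_assoc, hfin]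
      _ = d * W.card := by rw [← Nat.mul_add, hcards]

lemma oiFlip_oiFlip {m : ℕ} (u : Fin m → Bool) (i : Fin m) : OiFlip (OiFlip u i) i = u := by
  funext j
  by_cases h : j = i
  · subst h; rw [oiFlip_apply_self, oiFlip_apply_self, Bool.not_not]
  · rw [oiFlip_apply_ne _ _ _ h, oiFlip_apply_ne _ _ _ h]

lemma flip_coord_unique {m : ℕ} {u v : Fin m → Bool} {i j : Fin m}
    (hi : v = OiFlip u i) (hj : v = OiFlip u j) : i = j := by
  by_contra h
  have h1 : v i = !u i := by rw [hi, oiFlip_apply_self]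
  have h2 : v i = u i := by rw [hj, oiFlip_apply_ne _ _ _ h]
  rw [h1] at h2
  revert h2
  cases u i <;> simp

/-- Orientation lemma: the one-inclusion graph on a set `V` of binary vectors of
VC-dimension at most `d` (edges join vectors at Hamming distance exactly 1) admits an
orientation of its edges with all out-degrees at most `d`. -/
theorem one_inclusion_orientation {m d : ℕ} (V : Finset (Fin m → Bool))
    (hVC : ∀ I : Finset (Fin m), CubeShatters V I → I.card ≤ d) :
    ∃ o : (Fin m → Bool) → (Fin m → Bool) → Prop,
      (∀ u v, o u v → u ∈ V ∧ v ∈ V ∧ ∃ i, v = Function.update u i (!u i)) ∧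
      (∀ u ∈ V, ∀ v ∈ V, (∃ i, v = Function.update u i (!u i)) → (o u v ↔ ¬ o v u)) ∧
      (∀ u, Set.ncard {v | o u v} ≤ d) := by
  classical
  -- Hall's theorem setup
  set ι := {p : (Fin m → Bool) × Fin m // p ∈ OiEdges V} with hι
  set t : ι → Finset ((Fin m → Bool) × Fin d) :=
    fun e => ({e.1.1, OiFlip e.1.1 e.1.2} : Finset (Fin m → Bool)) ×ˢ Finset.univ with ht
  have hall : ∀ s : Finset ι, s.card ≤ (s.biUnion t).card := by
    intro s
    set T : Finset (Fin m → Bool) :=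
      s.biUnion (fun e => ({e.1.1, OiFlip e.1.1 e.1.2} : Finset (Fin m → Bool))) with hT
    have hTV : T ⊆ V := by
      intro w hw
      rw [hT, Finset.mem_biUnion] at hw
      obtain ⟨e, _, hw⟩ := hw
      have he := mem_oiEdges.1 e.2
      rw [Finset.mem_insert, Finset.mem_singleton] at hw
      rcases hw with rfl | rfl
      · exact he.1
      · exact he.2.2
    have hbi : s.biUnion t = T ×ˢ (Finset.univ : Finset (Fin d)) := by
      ext p
      simp only [Finset.mem_biUnion, Finset.mem_product, ht, hT, Finset.mem_univ, and_true]
    have hsT : s.card ≤ (OiEdges T).card := by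
      apply Finset.card_le_card_of_injOn (f := fun e => e.1)
      · intro e he
        have h2 := mem_oiEdges.1 e.2
        rw [Finset.mem_coe, mem_oiEdges]
        refine ⟨?_, h2.2.1, ?_⟩
        · rw [hT, Finset.mem_biUnion]
          exact ⟨e, he, by simp⟩
        · rw [hT, Finset.mem_biUnion]
          exact ⟨e, he, by simp⟩
      · intro e _ e' _ h
        exact Subtype.ext h
    have hdT : (OiEdges T).card ≤ d * T.card :=
      oi_density m d T (fun I hI => hVC I (cubeShatters_mono hTV hI))
    rw [hbi, Finset.card_product, Finset.card_univ, Fintype.card_fin]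
    calc s.card ≤ d * T.card := hsT.trans hdT
      _ = T.card * d := Nat.mul_comm _ _
  obtain ⟨f, finj, fmem⟩ := (Finset.all_card_le_biUnion_card_iff_exists_injective t).1 hall
  -- the orientation
  set o : (Fin m → Bool) → (Fin m → Bool) → Prop := fun u v =>
    ∃ i, v = Function.update u i (!u i) ∧
      ∃ h : ((if u i = false then u else v, i) : (Fin m → Bool) × Fin m) ∈ OiEdges V,
        (f ⟨(if u i = false then u else v, i), h⟩).1 = u with ho
  have edge_endpoints : ∀ {u v : Fin m → Bool} {i : Fin m}, v = OiFlip u i →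
      ((if u i = false then u else v, i) : (Fin m → Bool) × Fin m) ∈ OiEdges V →
      u ∈ V ∧ v ∈ V := by
    intro u v i hvu hmem
    rw [mem_oiEdges] at hmem
    by_cases hb : u i = false
    · rw [if_pos hb] at hmem
      refine ⟨hmem.1, ?_⟩
      rw [hvu]
      exact hmem.2.2
    · rw [if_neg hb] at hmem
      have hfl : OiFlip v i = u := by rw [hvu, oiFlip_oiFlip]
      refine ⟨?_, hmem.1⟩
      rw [← hfl]
      exact hmem.2.2
  have low_symm : ∀ {u v : Fin m → Bool} {i : Fin m}, v = OiFlip u i →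
      (if u i = false then u else v) = (if v i = false then v else u) := by
    intro u v i hvu
    have hv : v i = !u i := by rw [hvu, oiFlip_apply_self]
    by_cases hb : u i = false
    · rw [if_pos hb, if_neg (by rw [hv, hb]; simp)]
    · rw [if_neg hb, if_pos (by rw [hv]; revert hb; cases u i <;> simp)]
  have edge_mem : ∀ {u v : Fin m → Bool} {i : Fin m}, u ∈ V → v ∈ V → v = OiFlip u i →
      ((if u i = false then u else v, i) : (Fin m → Bool) × Fin m) ∈ OiEdges V := by
    intro u v i hu hv hvu
    have hv' : v i = !u i := by rw [hvu, oiFlip_apply_self]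
    rw [mem_oiEdges]
    by_cases hb : u i = false
    · rw [if_pos hb]
      refine ⟨hu, hb, ?_⟩
      show OiFlip u i ∈ V
      rw [← hvu]
      exact hv
    · rw [if_neg hb]
      have hbt : u i = true := by revert hb; cases u i <;> simp
      have hfl : OiFlip v i = u := by rw [hvu, oiFlip_oiFlip]
      refine ⟨hv, ?_, ?_⟩
      · show v i = false
        rw [hv', hbt]
        rfl
      · show OiFlip v i ∈ V
        rw [hfl]
        exact hu
  refine ⟨o, ?_, ?_, ?_⟩
  · rintro u v ⟨i, hvu, hmem, _⟩
    obtain ⟨hu, hv⟩ := edge_endpoints (show v = OiFlip u i from hvu) hmem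
    exact ⟨hu, hv, i, hvu⟩
  · rintro u hu v hv ⟨i, hvu0⟩
    have hvu : v = OiFlip u i := hvu0
    have huv : u = OiFlip v i := by rw [hvu, oiFlip_oiFlip]
    have hne : u ≠ v := by
      intro h
      have hvi : v i = !u i := by rw [hvu, oiFlip_apply_self]
      rw [← h] at hvi
      revert hvi
      cases u i <;> simp
    have hmem := edge_mem hu hv hvu
    set w : Fin m → Bool := (if u i = false then u else v) with hw
    have hw' : (if v i = false then v else u) = w := (low_symm hvu).symm
    have hmem' : ((if v i = false then v else u, i) : (Fin m → Bool) × Fin m) ∈ OiEdges V := by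
      rw [hw']
      exact hmem
    have hwcase : (w = u ∧ OiFlip w i = v) ∨ (w = v ∧ OiFlip w i = u) := by
      by_cases hb : u i = false
      · left
        constructor
        · rw [hw, if_pos hb]
        · rw [hw, if_pos hb, ← hvu]
      · right
        constructor
        · rw [hw, if_neg hb]
        · rw [hw, if_neg hb, ← huv]
    have hpick : (f ⟨(w, i), hmem⟩).1 = u ∨ (f ⟨(w, i), hmem⟩).1 = v := by
      have hmemt := fmem ⟨(w, i), hmem⟩
      simp only [ht, Finset.mem_product, Finset.mem_insert, Finset.mem_singleton] at hmemt
      rcases hwcase with ⟨he1, he2⟩ | ⟨he1, he2⟩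
      · rcases hmemt.1 with h | h
        · exact Or.inl (h.trans he1)
        · exact Or.inr (h.trans he2)
      · rcases hmemt.1 with h | h
        · exact Or.inr (h.trans he1)
        · exact Or.inl (h.trans he2)
    have houv : o u v ↔ (f ⟨(w, i), hmem⟩).1 = u := by
      simp only [ho]
      constructor
      · rintro ⟨i', hvu', hmem'', hf⟩
        have hii : i' = i := flip_coord_unique (show v = OiFlip u i' from hvu') hvu
        subst hii
        have heq : (⟨(if u i' = false then u else v, i'), hmem''⟩ : ι) = ⟨(w, i'), hmem⟩ :=
          Subtype.ext (show ((if u i' = false then u else v, i') : _ × _) = (w, i') by rw [hw])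
        rw [heq] at hf
        exact hf
      · intro h
        refine ⟨i, hvu0, ?_⟩
        have heq : (⟨(if u i = false then u else v, i), hmem⟩ : ι) = ⟨(w, i), hmem⟩ :=
          Subtype.ext (show ((if u i = false then u else v, i) : _ × _) = (w, i) by rw [hw])
        exact ⟨hmem, by rw [heq]; exact h⟩
    have hovu : o v u ↔ (f ⟨(w, i), hmem⟩).1 = v := by
      simp only [ho]
      constructor
      · rintro ⟨i', huv', hmem'', hf⟩
        have hii : i' = i := flip_coord_unique (show u = OiFlip v i' from huv') huv
        subst hii
        have heq : (⟨(if v i' = false then v else u, i'), hmem''⟩ : ι) = ⟨(w, i'), hmem⟩ :=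
          Subtype.ext (show ((if v i' = false then v else u, i') : _ × _) = (w, i') by rw [← hw'])
        rw [heq] at hf
        exact hf
      · intro h
        refine ⟨i, huv, ?_⟩
        have heq : (⟨(if v i = false then v else u, i), hmem'⟩ : ι) = ⟨(w, i), hmem⟩ :=
          Subtype.ext (show ((if v i = false then v else u, i) : _ × _) = (w, i) by rw [← hw'])
        exact ⟨hmem', by rw [heq]; exact h⟩
    rw [houv, hovu]
    rcases hpick with h | h
    · exact ⟨fun _ h' => hne (h.symm.trans h'), fun _ => h⟩
    · exact ⟨fun h' => absurd (h'.symm.trans h) hne, fun hn => absurd h hn⟩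
  · intro u
    have hcard : Nat.card {v // o u v} ≤ d := by
      have hle := Nat.card_le_card_of_injective
        (f := fun vh : {v // o u v} =>
          (f ⟨(if u vh.2.choose = false then u else vh.1, vh.2.choose),
            vh.2.choose_spec.2.choose⟩).2) ?_
      · calc Nat.card {v // o u v} ≤ Nat.card (Fin d) := hle
          _ = d := Nat.card_eq_fintype_card.trans (Fintype.card_fin d)
      · rintro ⟨v1, hv1⟩ ⟨v2, hv2⟩ hF
        dsimp only at hF
        have h1 := hv1.choose_spec
        have h2 := hv2.choose_spec
        have hf1 := h1.2.choose_spec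
        have hf2 := h2.2.choose_spec
        have hfeq : f ⟨(if u hv1.choose = false then u else v1, hv1.choose), h1.2.choose⟩
            = f ⟨(if u hv2.choose = false then u else v2, hv2.choose), h2.2.choose⟩ :=
          Prod.ext (by rw [hf1, hf2]) hF
        have hpair := congrArg Subtype.val (finj hfeq)
        have hi : hv1.choose = hv2.choose := congrArg Prod.snd hpair
        apply Subtype.ext
        show v1 = v2
        rw [h1.1, h2.1, hi]
    calc Set.ncard {v | o u v} = Nat.card {v // o u v} := (Nat.card_coe_set_eq _).symm
      _ ≤ d := hcard
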